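/- arXiv:2312.04243 — 2 statements merged into one kernel-verified Lean document; each statement's English description precedes it below -/
import Mathlib

section
/- Let a ≥ b > k > 0 be real numbers with k an integer. Then k·ln(a/b) ≤ ln((a)_k/(b)_k) ≤ k·ln((a−k)/(b−k)) ≤ k·ln(a/b)/(1 − k/b). -/
lemma descPochhammer_eval_prod (x : ℝ) (k : ℕ) :
    (descPochhammer ℝ k).eval x = ∏ i ∈ Finset.range k, (x - i) := by
  induction k with
  | zero => simp
  | succ n ih =>
      rw [descPochhammer_succ_eval, ih, Finset.prod_range_succ]

/-- `t ↦ t * log ((t + x) / t)` is monotone for `t > 0`, `x ≥ 0`. -/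
lemma mul_log_ratio_mono {t₁ t₂ x : ℝ} (h1 : 0 < t₁) (h12 : t₁ ≤ t₂) (hx : 0 ≤ x) :
    t₁ * Real.log ((t₁ + x) / t₁) ≤ t₂ * Real.log ((t₂ + x) / t₂) := by
  have h2 : 0 < t₂ := lt_of_lt_of_le h1 h12
  set lam : ℝ := t₁ / t₂ with hlam
  have hlam0 : 0 ≤ lam := by positivity
  have hlam1 : lam ≤ 1 := div_le_one_of_le₀ h12 h2.le
  have hconc := strictConcaveOn_log_Ioi.concaveOn
  have h1mem : (1 : ℝ) ∈ Set.Ioi (0 : ℝ) := by norm_num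
  have h2mem : (1 + x / t₁) ∈ Set.Ioi (0 : ℝ) := by
    simp only [Set.mem_Ioi]; positivity
  have key := hconc.2 h1mem h2mem (by linarith : (0:ℝ) ≤ 1 - lam) hlam0 (by ring)
  have hcomb : (1 - lam) • (1 : ℝ) + lam • (1 + x / t₁) = 1 + x / t₂ := by
    simp only [smul_eq_mul]
    have : lam * (x / t₁) = x / t₂ := by
      rw [hlam]
      field_simp
    nlinarith [this]
  rw [hcomb] at key
  simp only [smul_eq_mul, Real.log_one, mul_zero, zero_add] at key
  have e1 : (t₁ + x) / t₁ = 1 + x / t₁ := by field_simp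
  have e2 : (t₂ + x) / t₂ = 1 + x / t₂ := by field_simp
  rw [e1, e2]
  calc t₁ * Real.log (1 + x / t₁) = t₂ * (lam * Real.log (1 + x / t₁)) := by
        rw [hlam]
        field_simp
    _ ≤ t₂ * Real.log (1 + x / t₂) := by
        apply mul_le_mul_of_nonneg_left _ h2.le
        linarith [key]

/-- Gao–Wormald inequality: for real `a ≥ b > k > 0` with `k` an integer,
`k ln(a/b) ≤ ln((a)_k/(b)_k) ≤ k ln((a-k)/(b-k)) ≤ k ln(a/b)/(1 - k/b)`. -/
theorem stmt_10 (a b : ℝ) (k : ℕ) (hk : 0 < k) (hbk : (k : ℝ) < b) (hab : b ≤ a) :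
    (k : ℝ) * Real.log (a / b) ≤
        Real.log ((descPochhammer ℝ k).eval a / (descPochhammer ℝ k).eval b) ∧
    Real.log ((descPochhammer ℝ k).eval a / (descPochhammer ℝ k).eval b) ≤
        (k : ℝ) * Real.log ((a - (k : ℝ)) / (b - (k : ℝ))) ∧
    (k : ℝ) * Real.log ((a - (k : ℝ)) / (b - (k : ℝ))) ≤
        (k : ℝ) * Real.log (a / b) / (1 - (k : ℝ) / b) := by
  have hkpos : (0 : ℝ) < k := by exact_mod_cast hk
  have hb : (0 : ℝ) < b := lt_trans hkpos hbk
  have ha : (0 : ℝ) < a := lt_of_lt_of_le hb hab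
  have hbk' : (0 : ℝ) < b - k := by linarith
  have hak' : (0 : ℝ) < a - k := by linarith
  have hbi : ∀ i ∈ Finset.range k, (0 : ℝ) < b - i := by
    intro i hi
    have : (i : ℝ) < k := by exact_mod_cast Finset.mem_range.mp hi
    linarith
  have hai : ∀ i ∈ Finset.range k, (0 : ℝ) < a - i := by
    intro i hi
    have := hbi i hi
    linarith
  -- log of ratio as a sum
  have hlog : Real.log ((descPochhammer ℝ k).eval a / (descPochhammer ℝ k).eval b)
      = ∑ i ∈ Finset.range k, Real.log ((a - i) / (b - i)) := by
    rw [descPochhammer_eval_prod, descPochhammer_eval_prod, ← Finset.prod_div_distrib,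
      Real.log_prod]
    intro i hi
    exact div_ne_zero (hai i hi).ne' (hbi i hi).ne'
  -- each term bounds
  have hterm_lo : ∀ i ∈ Finset.range k,
      Real.log (a / b) ≤ Real.log ((a - i) / (b - i)) := by
    intro i hi
    apply Real.log_le_log (by positivity)
    rw [div_le_div_iff₀ hb (hbi i hi)]
    have hi' : (0 : ℝ) ≤ i := by positivity
    nlinarith
  have hterm_hi : ∀ i ∈ Finset.range k,
      Real.log ((a - i) / (b - i)) ≤ Real.log ((a - k) / (b - k)) := by
    intro i hi
    apply Real.log_le_log (div_pos (hai i hi) (hbi i hi))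
    rw [div_le_div_iff₀ (hbi i hi) hbk']
    have hik : (i : ℝ) ≤ k := by
      exact_mod_cast (Finset.mem_range.mp hi).le
    nlinarith [mul_nonneg (sub_nonneg.mpr hik) (sub_nonneg.mpr hab)]
  constructor
  · rw [hlog]
    calc (k : ℝ) * Real.log (a / b)
        = ∑ _i ∈ Finset.range k, Real.log (a / b) := by
          rw [Finset.sum_const, Finset.card_range, nsmul_eq_mul]
      _ ≤ ∑ i ∈ Finset.range k, Real.log ((a - i) / (b - i)) :=
          Finset.sum_le_sum hterm_lo
  constructor
  · rw [hlog]
    calc ∑ i ∈ Finset.range k, Real.log ((a - i) / (b - i))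
        ≤ ∑ _i ∈ Finset.range k, Real.log ((a - k) / (b - k)) :=
          Finset.sum_le_sum hterm_hi
      _ = (k : ℝ) * Real.log ((a - k) / (b - k)) := by
          rw [Finset.sum_const, Finset.card_range, nsmul_eq_mul]
  · -- third inequality
    have hx : (0 : ℝ) ≤ a - b := by linarith
    have hmono := mul_log_ratio_mono hbk' (by linarith : b - (k:ℝ) ≤ b) hx
    have e1 : (b - k) + (a - b) = a - k := by ring
    have e2 : b + (a - b) = a := by ring
    rw [e1, e2] at hmono
    have hden : (0 : ℝ) < 1 - (k : ℝ) / b := by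
      rw [sub_pos, div_lt_one hb]; exact hbk
    rw [le_div_iff₀ hden]
    have : (1 - (k : ℝ) / b) = (b - k) / b := by field_simp
    rw [this]
    calc (k : ℝ) * Real.log ((a - k) / (b - k)) * ((b - k) / b)
        = (k / b) * ((b - k) * Real.log ((a - k) / (b - k))) := by ring
      _ ≤ (k / b) * (b * Real.log (a / b)) :=
          mul_le_mul_of_nonneg_left hmono (by positivity)
      _ = (k : ℝ) * Real.log (a / b) := by
          field_simp
end

section
/- Let p = (p_i)_{i≥0} be a probability distribution on ℕ₀ with mean Σ_i i·p_i ≤ 1, and let T be a rooted plane tree with |T| > 1 such that π_p(T) := ∏_{i≥0} p_i^{n_T(i)} > 0. Then γ_p(T,T) := π_p(T) + η_p(T,T)·π_p(T)² > 0, where η_p(T,T) := (|T|−1)² − Σ_{i≥0} n_T(i)²/p_i (with 0/0 := 0). -/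
inductive PTree : Type where
  | node : List PTree → PTree

namespace PTree

/-- The number of vertices of a rooted plane tree. -/
def size : PTree → ℕ
  | node ts => 1 + (ts.attach.map (fun x => size x.1)).sum
decreasing_by
  simp only [PTree.node.sizeOf_spec]
  have := List.sizeOf_lt_of_mem x.2
  omega

/-- `degCount i T` is the number of vertices of `T` with exactly `i` children. -/
def degCount (i : ℕ) : PTree → ℕ
  | node ts => (if ts.length = i then 1 else 0) + (ts.attach.map (fun x => degCount i x.1)).sum
decreasing_by
  simp only [PTree.node.sizeOf_spec]
  have := List.sizeOf_lt_of_mem x.2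
  omega

end PTree
/-- `piP p T = ∏_i p_i ^ n_T(i)`, the Galton--Watson probability of the plane tree `T`
under offspring distribution `p`.  (All out-degrees of `T` are `< T.size`.) -/
noncomputable def piP (p : ℕ → ℝ) (T : PTree) : ℝ :=
  ∏ i ∈ Finset.range T.size, p i ^ T.degCount i
/-- `etaP p T = (|T|-1)^2 - ∑_i n_T(i)^2 / p_i` (with `x/0 = 0` as in Lean). -/
noncomputable def etaP (p : ℕ → ℝ) (T : PTree) : ℝ :=
  ((T.size : ℝ) - 1) ^ 2 - ∑ i ∈ Finset.range T.size, (T.degCount i : ℝ) ^ 2 / p i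

/-- `gammaP p T = π_p(T) + η_p(T,T) π_p(T)^2`. -/
noncomputable def gammaP (p : ℕ → ℝ) (T : PTree) : ℝ :=
  piP p T + etaP p T * (piP p T) ^ 2

namespace PTree

theorem my_ind {motive : PTree → Prop}
    (h : ∀ ts : List PTree, (∀ t ∈ ts, motive t) → motive (PTree.node ts)) : ∀ t, motive t
  | node ts => h ts (fun t _ => my_ind h t)
decreasing_by
  simp only [PTree.node.sizeOf_spec]
  rename_i ht
  have := List.sizeOf_lt_of_mem ht
  omega

theorem size_node (ts : List PTree) : (node ts).size = 1 + (ts.map size).sum := by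
  rw [size, List.attach_map_val]

theorem degCount_node (i : ℕ) (ts : List PTree) :
    degCount i (node ts) = (if ts.length = i then 1 else 0) + (ts.map (degCount i)).sum := by
  rw [degCount, List.attach_map_val]

theorem one_le_size (t : PTree) : 1 ≤ t.size := by
  obtain ⟨ts⟩ := t
  rw [size_node]; omega

theorem size_le_of_mem {t : PTree} {ts : List PTree} (h : t ∈ ts) :
    t.size ≤ (ts.map size).sum :=
  List.single_le_sum (fun _ _ => Nat.zero_le _) _ (List.mem_map_of_mem (f := size) h)

/-- interchange of a `Finset.range` sum with a list sum -/
theorem sum_list_swap {α : Type*} (l : List α) (N : ℕ) (f : ℕ → α → ℕ) :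
    ∑ i ∈ Finset.range N, (l.map (f i)).sum = (l.map (fun t => ∑ i ∈ Finset.range N, f i t)).sum := by
  induction l with
  | nil => simp
  | cons a l ih => simp [Finset.sum_add_distrib, ih]

theorem length_le_sum_size (ts : List PTree) : ts.length ≤ (ts.map size).sum := by
  induction ts with
  | nil => simp
  | cons a l ih =>
    have := one_le_size a
    simp only [List.length_cons, List.map_cons, List.sum_cons]
    omega

theorem sum_degCount (t : PTree) : ∀ N, t.size ≤ N →
    ∑ i ∈ Finset.range N, degCount i t = t.size := by
  induction t using my_ind with
  | h ts IH =>
    intro N hN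
    rw [size_node] at hN ⊢
    have hlen : ts.length < N := lt_of_le_of_lt (length_le_sum_size ts) (by omega)
    calc ∑ i ∈ Finset.range N, degCount i (node ts)
        = ∑ i ∈ Finset.range N, ((if ts.length = i then 1 else 0) + (ts.map (degCount i)).sum) := by
          simp only [degCount_node]
      _ = (∑ i ∈ Finset.range N, (if ts.length = i then 1 else 0))
            + ∑ i ∈ Finset.range N, (ts.map (degCount i)).sum := Finset.sum_add_distrib
      _ = 1 + (ts.map size).sum := by
          congr 1
          · rw [Finset.sum_ite_eq]
            simp [Finset.mem_range.mpr hlen]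
          · rw [sum_list_swap]
            congr 1
            apply List.map_congr_left
            intro t ht
            exact IH t ht N (le_trans (size_le_of_mem ht) (by omega))

theorem one_le_degCount_zero (t : PTree) : 1 ≤ degCount 0 t := by
  induction t using my_ind with
  | h ts IH =>
    rw [degCount_node]
    cases ts with
    | nil => simp
    | cons a l =>
      have h1 : 1 ≤ degCount 0 a := IH a (by simp)
      have h2 : degCount 0 a ≤ ((a :: l).map (degCount 0)).sum := by
        simp only [List.map_cons, List.sum_cons]; omega
      omega

theorem one_le_degCount_root (ts : List PTree) : 1 ≤ degCount ts.length (node ts) := by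
  rw [degCount_node]; simp

end PTree



/-- `(1+x)^r (1 - r x) ≤ 1` for `x ≥ -1`. -/
theorem lemL2 (r : ℕ) : ∀ x : ℝ, -1 ≤ x → (1+x)^r * (1 - r*x) ≤ 1 := by
  induction r with
  | zero => intro x _; simp
  | succ n ih =>
    intro x hx
    have h1 : (0:ℝ) ≤ 1 + x := by linarith
    have key : (1+x)^(n+1) * (1 - (n+1 : ℕ)*x) = (1+x)^n * ((1+x) * (1 - ((n:ℝ)+1)*x)) := by
      push_cast; ring
    rw [key]
    have h2 : (1+x) * (1 - ((n:ℝ)+1)*x) ≤ 1 - (n:ℝ)*x := by nlinarith [sq_nonneg x]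
    calc (1+x)^n * ((1+x) * (1 - ((n:ℝ)+1)*x)) ≤ (1+x)^n * (1 - (n:ℝ)*x) :=
          mul_le_mul_of_nonneg_left h2 (pow_nonneg h1 n)
      _ ≤ 1 := ih x hx

/-- `(2r+1) p^r (1-p) ≤ 1` for `p ∈ [0,1]`, `r ≥ 1`. -/
theorem lemL1 (r : ℕ) (hr : 1 ≤ r) (p : ℝ) (h0 : 0 ≤ p) (h1 : p ≤ 1) :
    (2*(r:ℝ)+1) * (p^r * (1-p)) ≤ 1 := by
  have hrR : (1:ℝ) ≤ (r:ℝ) := by exact_mod_cast hr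
  have hrpos : (0:ℝ) < r := by linarith
  set x : ℝ := ((r:ℝ)+1)*p/r - 1 with hxdef
  have hx : -1 ≤ x := by
    have : 0 ≤ ((r:ℝ)+1)*p/r := by positivity
    simp only [hxdef]; linarith
  have hL2 := lemL2 r x hx
  have h1x : 1 + x = ((r:ℝ)+1)*p/r := by simp [hxdef]
  have hrx : 1 - (r:ℝ)*x = ((r:ℝ)+1)*(1-p) := by
    rw [hxdef, mul_sub, mul_div_assoc', mul_div_cancel_left₀ _ (ne_of_gt hrpos)]
    ring
  rw [h1x, hrx] at hL2
  have hpow : (((r:ℝ)+1)*p/r)^r = ((r:ℝ)+1)^r / (r:ℝ)^r * p^r := by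
    rw [div_pow, mul_pow]; ring
  rw [hpow] at hL2
  -- Bernoulli: ((r+1)/r)^r ≥ 2
  have hbern : (2:ℝ) ≤ ((r:ℝ)+1)^r / (r:ℝ)^r := by
    have h := one_add_mul_le_pow (a := 1/(r:ℝ)) (by linarith [one_div_nonneg.mpr (le_of_lt hrpos)] : (-2:ℝ) ≤ 1/(r:ℝ)) r
    have h2 : (1:ℝ) + r * (1/r) = 2 := by
      rw [mul_one_div, div_self (ne_of_gt hrpos)]; norm_num
    have h3 : ((1:ℝ) + 1/r)^r = ((r:ℝ)+1)^r / (r:ℝ)^r := by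
      rw [← div_pow]
      congr 1
      field_simp
    rw [h2, h3] at h
    exact h
  have hnn : 0 ≤ p^r * (1-p) := by
    apply mul_nonneg (pow_nonneg h0 r); linarith
  have hstep : (2:ℝ) * (((r:ℝ)+1) * (p^r*(1-p))) ≤ ((r:ℝ)+1)^r/(r:ℝ)^r * (((r:ℝ)+1) * (p^r*(1-p))) := by
    apply mul_le_mul_of_nonneg_right hbern
    positivity
  have hre : ((r:ℝ)+1)^r/(r:ℝ)^r * (((r:ℝ)+1) * (p^r*(1-p)))
      = ((r:ℝ)+1)^r/(r:ℝ)^r * p^r * (((r:ℝ)+1)*(1-p)) := by ring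
  have hfin : (2:ℝ) * (((r:ℝ)+1) * (p^r*(1-p))) ≤ 1 := by
    rw [hre] at hstep
    exact le_trans hstep hL2
  nlinarith [hnn]

theorem lemE : ∀ (n : ℕ) (s : Finset ℕ) (p : ℕ → ℝ), s.card = n → s.Nonempty →
    (∀ i ∈ s, 0 ≤ p i) → (∑ i ∈ s, p i ≤ 1) →
    ∑ i ∈ s, ∏ j ∈ s.erase i, p j ≤ 1 := by
  intro n
  induction n using Nat.strong_induction_on with
  | _ n IHn =>
    intro s p hcard hne hnn hsum
    obtain ⟨a, ha⟩ := hne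
    by_cases h1 : s.erase a = ∅
    · -- s = {a}
      have hs : s = {a} := by
        apply Finset.eq_singleton_iff_unique_mem.mpr
        refine ⟨ha, fun x hx => ?_⟩
        by_contra hxa
        exact (Finset.ne_empty_of_mem (Finset.mem_erase.mpr ⟨hxa, hx⟩)) h1
      simp [hs]
    · have htne : (s.erase a).Nonempty := Finset.nonempty_of_ne_empty h1
      set t := s.erase a with ht
      have hp1 : ∀ i ∈ s, p i ≤ 1 := by
        intro i hi
        calc p i ≤ ∑ j ∈ s, p j := Finset.single_le_sum hnn hi
          _ ≤ 1 := hsum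
      have hsplit : ∑ i ∈ s, ∏ j ∈ s.erase i, p j
          = ∏ j ∈ t, p j + ∑ i ∈ t, ∏ j ∈ s.erase i, p j := by
        rw [← Finset.add_sum_erase _ _ ha]
      have hterm : ∀ i ∈ t, ∏ j ∈ s.erase i, p j = p a * ∏ j ∈ t.erase i, p j := by
        intro i hi
        have hia : i ≠ a := (Finset.mem_erase.mp hi).1
        have his : i ∈ s := (Finset.mem_erase.mp hi).2
        have haei : a ∈ s.erase i := Finset.mem_erase.mpr ⟨fun h => hia h.symm, ha⟩
        have hset : (s.erase i).erase a = t.erase i := by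
          ext x
          simp only [Finset.mem_erase, ht]
          tauto
        rw [← Finset.mul_prod_erase _ _ haei, hset]
      have hsum_t : ∑ i ∈ t, p i ≤ 1 := by
        have : ∑ i ∈ s, p i = p a + ∑ i ∈ t, p i := (Finset.add_sum_erase _ _ ha).symm
        have hpa := hnn a ha
        linarith
      have hIH : ∑ i ∈ t, ∏ j ∈ t.erase i, p j ≤ 1 := by
        apply IHn t.card (by rw [← hcard, ht]; exact Finset.card_erase_lt_of_mem ha)
          t p rfl htne (fun i hi => hnn i (Finset.mem_erase.mp hi).2) hsum_t
      have hprod_t : ∏ j ∈ t, p j ≤ ∑ i ∈ t, p i := by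
        obtain ⟨l, hl⟩ := htne
        calc ∏ j ∈ t, p j = p l * ∏ j ∈ t.erase l, p j := (Finset.mul_prod_erase _ _ hl).symm
          _ ≤ p l * 1 := by
              apply mul_le_mul_of_nonneg_left _ (hnn l (Finset.mem_erase.mp hl).2)
              apply Finset.prod_le_one
              · intro i hi
                exact hnn i (Finset.mem_erase.mp (Finset.mem_erase.mp hi).2).2
              · intro i hi
                exact hp1 i (Finset.mem_erase.mp (Finset.mem_erase.mp hi).2).2
          _ = p l := mul_one _
          _ ≤ ∑ i ∈ t, p i := Finset.single_le_sum
              (fun i hi => hnn i (Finset.mem_erase.mp hi).2) hl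
      rw [hsplit, Finset.sum_congr rfl hterm, ← Finset.mul_sum]
      have hpa := hnn a ha
      have h2 : p a * ∑ i ∈ t, ∏ j ∈ t.erase i, p j ≤ p a * 1 :=
        mul_le_mul_of_nonneg_left hIH hpa
      have h3 : ∑ i ∈ s, p i = p a + ∑ i ∈ t, p i := (Finset.add_sum_erase _ _ ha).symm
      linarith

set_option maxHeartbeats 1000000 in
theorem lemK (s : Finset ℕ) (p : ℕ → ℝ) (hp : ∀ i ∈ s, 0 < p i) (hs1 : ∑ i ∈ s, p i ≤ 1)
    (hcard : 2 ≤ s.card) :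
    ∀ (N : ℕ), ∀ (m : ℕ → ℕ), (∀ i ∈ s, 1 ≤ m i) → ∑ i ∈ s, m i = N →
    ∑ i ∈ s, (m i : ℝ)^2 * ((∏ j ∈ s, p j ^ m j) / p i) + ∏ j ∈ s, p j ^ m j
      ≤ 1 + ((N:ℝ) - 1)^2 * ∏ j ∈ s, p j ^ m j := by
  have hp1 : ∀ i ∈ s, p i ≤ 1 := fun i hi =>
    le_trans (Finset.single_le_sum (fun j hj => (hp j hj).le) hi) hs1
  intro N
  induction N using Nat.strong_induction_on with
  | _ N IH =>
    intro m hm hsum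
    have hNcard : s.card ≤ N := by
      rw [← hsum]
      calc s.card = ∑ _i ∈ s, 1 := by simp
        _ ≤ ∑ i ∈ s, m i := Finset.sum_le_sum hm
    have hN2 : 2 ≤ N := le_trans hcard hNcard
    have hPAnn : (0:ℝ) ≤ ∏ j ∈ s, p j ^ m j :=
      Finset.prod_nonneg (fun j hj => pow_nonneg (hp j hj).le _)
    by_cases hall : ∀ i ∈ s, m i = 1
    · -- all multiplicities one
      have hprod : ∏ j ∈ s, p j ^ m j = ∏ j ∈ s, p j :=
        Finset.prod_congr rfl (fun j hj => by rw [hall j hj, pow_one])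
      have hterm : ∀ i ∈ s, (m i:ℝ)^2 * ((∏ j ∈ s, p j ^ m j) / p i)
          = ∏ j ∈ s.erase i, p j := by
        intro i hi
        rw [hall i hi, hprod, ← Finset.mul_prod_erase _ _ hi,
          mul_div_cancel_left₀ _ (ne_of_gt (hp i hi))]
        norm_num
      rw [Finset.sum_congr rfl hterm, hprod]
      have hE := lemE s.card s p rfl (Finset.card_pos.mp (by omega))
        (fun i hi => (hp i hi).le) hs1
      have hNR : (1:ℝ) ≤ ((N:ℝ)-1)^2 := by
        have : (2:ℝ) ≤ (N:ℝ) := by exact_mod_cast hN2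
        nlinarith
      have hπ : (0:ℝ) ≤ ∏ j ∈ s, p j := by rw [← hprod]; exact hPAnn
      nlinarith
    · -- some m j ≥ 2
      push_neg at hall
      obtain ⟨j, hj, hmj1⟩ := hall
      have hmj : 2 ≤ m j := by have := hm j hj; omega
      obtain ⟨l, hl⟩ : (s.erase j).Nonempty := by
        rw [← Finset.card_pos, Finset.card_erase_of_mem hj]; omega
      have hlj : l ≠ j := (Finset.mem_erase.mp hl).1
      have hls : l ∈ s := (Finset.mem_erase.mp hl).2
      have hsplitN : m j + ∑ i ∈ s.erase j, m i = N := by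
        rw [Finset.add_sum_erase _ _ hj]; exact hsum
      have hml : m l ≤ ∑ i ∈ s.erase j, m i :=
        Finset.single_le_sum (fun i _ => Nat.zero_le _) hl
      have hml1 := hm l hls
      have hNmj : m j + 1 ≤ N := by omega
      set m' := Function.update m j (m j - 1) with hm'def
      have hm'j : m' j = m j - 1 := Function.update_self _ _ _
      have hm'i : ∀ i, i ≠ j → m' i = m i := fun i hij => Function.update_of_ne hij _ _
      have hm'1 : ∀ i ∈ s, 1 ≤ m' i := by
        intro i hi
        by_cases h : i = j
        · rw [h, hm'j]; omega
        · rw [hm'i i h]; exact hm i hi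
      have hsum' : ∑ i ∈ s, m' i = N - 1 := by
        have e1 : ∑ i ∈ s, m' i = m' j + ∑ i ∈ s.erase j, m' i :=
          (Finset.add_sum_erase _ _ hj).symm
        have e2 : ∑ i ∈ s.erase j, m' i = ∑ i ∈ s.erase j, m i :=
          Finset.sum_congr rfl (fun i hi => hm'i i (Finset.mem_erase.mp hi).1)
        rw [e1, e2, hm'j]
        omega
      -- abbreviations
      set Q : ℝ := ∏ i ∈ s.erase j, p i ^ m i with hQdef
      set PA : ℝ := ∏ i ∈ s, p i ^ m i with hPAdef
      set PB : ℝ := ∏ i ∈ s, p i ^ m' i with hPBdef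
      have hpj := hp j hj
      have hpj1 := hp1 j hj
      have hQnn : 0 ≤ Q :=
        Finset.prod_nonneg (fun i hi => pow_nonneg (hp i (Finset.mem_erase.mp hi).2).le _)
      have hπeq : PA = p j ^ m j * Q := (Finset.mul_prod_erase _ _ hj).symm
      have hπ'eq : PB = p j ^ (m j - 1) * Q := by
        rw [hPBdef, ← Finset.mul_prod_erase _ _ hj, hm'j]
        congr 1
        exact Finset.prod_congr rfl (fun i hi => by rw [hm'i i (Finset.mem_erase.mp hi).1])
      have hpow : p j ^ m j = p j ^ (m j - 1) * p j := by
        conv_lhs => rw [show m j = (m j - 1) + 1 by omega]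
        rw [pow_succ]
      have hππ' : PA = p j * PB := by rw [hπeq, hπ'eq, hpow]; ring
      have hPBnn : (0:ℝ) ≤ PB :=
        Finset.prod_nonneg (fun i hi => pow_nonneg (hp i hi).le _)
      -- Q ≤ 1 - p j
      have hQle : Q ≤ 1 - p j := by
        have h1 : Q = p l ^ m l * ∏ i ∈ (s.erase j).erase l, p i ^ m i :=
          (Finset.mul_prod_erase _ _ hl).symm
        have h2 : ∏ i ∈ (s.erase j).erase l, p i ^ m i ≤ 1 := by
          apply Finset.prod_le_one
          · intro i hi
            exact pow_nonneg (hp i (Finset.mem_erase.mp (Finset.mem_erase.mp hi).2).2).le _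
          · intro i hi
            have his := (Finset.mem_erase.mp (Finset.mem_erase.mp hi).2).2
            exact pow_le_one₀ (hp i his).le (hp1 i his)
        have h3 : p l ^ m l ≤ p l := by
          apply pow_le_of_le_one (hp l hls).le (hp1 l hls)
          omega
        have h4 : p j + p l ≤ ∑ i ∈ s, p i := by
          rw [← Finset.add_sum_erase _ _ hj]
          gcongr
          exact Finset.single_le_sum (fun i hi => (hp i (Finset.mem_erase.mp hi).2).le) hl
        have h5 : p l ≤ 1 - p j := by linarith
        calc Q = p l ^ m l * ∏ i ∈ (s.erase j).erase l, p i ^ m i := h1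
          _ ≤ p l ^ m l * 1 := by
              apply mul_le_mul_of_nonneg_left h2 (pow_nonneg (hp l hls).le _)
          _ = p l ^ m l := mul_one _
          _ ≤ p l := h3
          _ ≤ 1 - p j := h5
      -- sum decompositions
      have hB : ∀ i ∈ s.erase j, (m i:ℝ)^2 * (PA / p i) = p j * ((m' i:ℝ)^2 * (PB / p i)) := by
        intro i hi
        rw [hm'i i (Finset.mem_erase.mp hi).1, hππ', mul_div_assoc]
        ring
      have hdivj : PA / p j = PB := by rw [hππ', mul_div_cancel_left₀ _ (ne_of_gt hpj)]
      have hdivj' : p j * (PB / p j) = PB := by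
        rw [mul_div_assoc']
        exact mul_div_cancel_left₀ _ (ne_of_gt hpj)
      have hmjR : ((m j - 1 : ℕ):ℝ) = (m j : ℝ) - 1 := by
        have : 1 ≤ m j := by omega
        push_cast [this]
        ring
      have eq1 : ∑ i ∈ s, (m i:ℝ)^2 * (PA / p i)
          = (m j:ℝ)^2 * PB + p j * ∑ i ∈ s.erase j, (m' i:ℝ)^2 * (PB / p i) := by
        rw [← Finset.add_sum_erase _ _ hj, hdivj, Finset.sum_congr rfl hB, ← Finset.mul_sum]
      have eq2 : ∑ i ∈ s, (m' i:ℝ)^2 * (PB / p i)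
          = ((m j:ℝ)-1)^2 * (PB / p j) + ∑ i ∈ s.erase j, (m' i:ℝ)^2 * (PB / p i) := by
        rw [← Finset.add_sum_erase _ _ hj, hm'j, hmjR]
      -- IH
      have hIH := IH (N-1) (by omega) m' hm'1 hsum'
      rw [← hPBdef] at hIH
      have hNR : ((N - 1 : ℕ):ℝ) = (N:ℝ) - 1 := by
        have : 1 ≤ N := by omega
        push_cast [this]; ring
      rw [hNR] at hIH
      -- key inequality
      have hr1 : 1 ≤ m j - 1 := by omega
      have hL1 := lemL1 (m j - 1) hr1 (p j) hpj.le hpj1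
      have hcast : (2*((m j - 1:ℕ):ℝ)+1) = 2*(m j:ℝ) - 1 := by rw [hmjR]; ring
      rw [hcast] at hL1
      have hkey1 : (2*(m j:ℝ)-1) * PB * (1 - p j) ≤ 1 - p j := by
        have : (2*(m j:ℝ)-1) * PB * (1 - p j)
            = ((2*(m j:ℝ)-1) * (p j ^ (m j - 1) * (1 - p j))) * Q := by
          rw [hπ'eq]; ring
        rw [this]
        calc ((2*(m j:ℝ)-1) * (p j ^ (m j - 1) * (1 - p j))) * Q ≤ 1 * Q := by
              apply mul_le_mul_of_nonneg_right hL1 hQnn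
          _ = Q := one_mul _
          _ ≤ 1 - p j := hQle
      have hmjN : (2*(m j:ℝ)-1) ≤ 2*(N:ℝ)-3 := by
        have : (m j : ℝ) + 1 ≤ (N:ℝ) := by exact_mod_cast hNmj
        linarith
      have hkey2 : (2*(m j:ℝ)-1) * (p j * PB) ≤ (2*(N:ℝ)-3) * PA := by
        rw [hππ']
        apply mul_le_mul_of_nonneg_right hmjN (by positivity)
      have hkey : (2*(m j:ℝ)-1) * PB ≤ (1 - p j) + (2*(N:ℝ)-3) * PA := by
        have : (2*(m j:ℝ)-1) * PB = (2*(m j:ℝ)-1) * PB * (1 - p j)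
            + (2*(m j:ℝ)-1) * (p j * PB) := by ring
        linarith
      -- assemble
      have hmsub : ∑ i ∈ s.erase j, (m' i:ℝ)^2 * (PB / p i)
          = (∑ i ∈ s, (m' i:ℝ)^2 * (PB / p i)) - ((m j:ℝ)-1)^2 * (PB / p j) := by
        rw [eq2]; ring
      have hPBpj : 0 ≤ PB / p j := div_nonneg hPBnn hpj.le
      have hS'le : ∑ i ∈ s, (m' i:ℝ)^2 * (PB / p i) ≤ 1 + ((N:ℝ)-2)^2 * PB - PB := by
        have heq : ((N:ℝ) - 1 - 1)^2 = ((N:ℝ)-2)^2 := by ring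
        rw [heq] at hIH
        linarith
      have hfinal : ∑ i ∈ s, (m i:ℝ)^2 * (PA / p i) + PA
          ≤ p j + ((N:ℝ)-2)^2 * PA + (2*(m j:ℝ)-1) * PB := by
        rw [eq1, hmsub]
        have hpjS : p j * ((∑ i ∈ s, (m' i:ℝ)^2 * (PB / p i)) - ((m j:ℝ)-1)^2 * (PB / p j))
            ≤ p j * (1 + ((N:ℝ)-2)^2 * PB - PB - ((m j:ℝ)-1)^2 * (PB / p j)) := by
          apply mul_le_mul_of_nonneg_left _ hpj.le
          linarith
        have hexpand : p j * (1 + ((N:ℝ)-2)^2 * PB - PB - ((m j:ℝ)-1)^2 * (PB / p j))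
            = p j + ((N:ℝ)-2)^2 * PA - PA - ((m j:ℝ)-1)^2 * PB := by
          have e : p j * (1 + ((N:ℝ)-2)^2 * PB - PB - ((m j:ℝ)-1)^2 * (PB / p j))
              = p j + ((N:ℝ)-2)^2 * (p j * PB) - p j * PB
                - ((m j:ℝ)-1)^2 * (p j * (PB / p j)) := by ring
          rw [e, hdivj', ← hππ']
        linarith [hpjS, hexpand.symm.le, hexpand.le]
      have hsq : ((N:ℝ)-1)^2 * PA = ((N:ℝ)-2)^2 * PA + (2*(N:ℝ)-3) * PA := by ring
      linarith [hfinal, hkey, hsq]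


set_option maxHeartbeats 1000000 in
theorem stmt_11' (p : ℕ → ℝ) (hp0 : ∀ i, 0 ≤ p i) (hp1 : HasSum p 1)
    (T : PTree) (hT : 1 < T.size) (hpi : 0 < piP p T) :
    0 < gammaP p T := by
  obtain ⟨ts⟩ := T
  set n : ℕ := (PTree.node ts).size with hn
  set m : ℕ → ℕ := fun i => (PTree.node ts).degCount i with hm
  set R : Finset ℕ := Finset.range n with hR
  set D : Finset ℕ := R.filter (fun i => m i ≠ 0) with hD
  have hsize : ∑ i ∈ R, m i = n := PTree.sum_degCount _ n le_rfl
  have hpiTdef : piP p (PTree.node ts) = ∏ i ∈ R, p i ^ m i := rfl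
  have hDprod : ∏ i ∈ D, p i ^ m i = ∏ i ∈ R, p i ^ m i := by
    apply Finset.prod_filter_of_ne
    intro x _ hx
    intro h0
    apply hx
    rw [h0, pow_zero]
  have hDsum : ∑ i ∈ D, m i = n := by
    rw [← hsize]
    apply Finset.sum_filter_of_ne
    intro x _ hx
    exact hx
  have hppos : ∀ i ∈ D, 0 < p i := by
    intro i hi
    obtain ⟨hiR, hmi⟩ := Finset.mem_filter.mp hi
    rcases lt_or_eq_of_le (hp0 i) with h | h
    · exact h
    · exfalso
      have hz : p i ^ m i = 0 := by rw [← h, zero_pow hmi]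
      have : piP p (PTree.node ts) = 0 := by
        rw [hpiTdef]
        exact Finset.prod_eq_zero hiR hz
      rw [this] at hpi
      exact lt_irrefl 0 hpi
  have hDsump : ∑ i ∈ D, p i ≤ 1 := sum_le_hasSum D (fun i _ => hp0 i) hp1
  -- the degree set has at least two elements
  have htsne : ts ≠ [] := by
    intro h
    rw [h] at hn
    rw [PTree.size_node] at hn
    simp at hn
    omega
  have hk1 : 1 ≤ ts.length := by
    cases ts with
    | nil => exact absurd rfl htsne
    | cons a l => simp
  have hkn : ts.length < n := by
    have h1 := PTree.length_le_sum_size ts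
    have h2 : n = 1 + (ts.map PTree.size).sum := by rw [hn, PTree.size_node]
    omega
  have h0D : 0 ∈ D := by
    rw [hD, Finset.mem_filter]
    constructor
    · rw [hR, Finset.mem_range]; omega
    · have := PTree.one_le_degCount_zero (PTree.node ts)
      simp only [hm]
      omega
  have hkD : ts.length ∈ D := by
    rw [hD, Finset.mem_filter]
    constructor
    · rw [hR, Finset.mem_range]; exact hkn
    · have := PTree.one_le_degCount_root ts
      simp only [hm]
      omega
  have hcard : 2 ≤ D.card := by
    have hsub : ({0, ts.length} : Finset ℕ) ⊆ D := by
      intro x hx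
      rcases Finset.mem_insert.mp hx with h | h
      · rw [h]; exact h0D
      · rw [Finset.mem_singleton.mp h]; exact hkD
    have hcard2 : ({0, ts.length} : Finset ℕ).card = 2 := by
      rw [Finset.card_insert_of_notMem (by simp; omega), Finset.card_singleton]
    rw [← hcard2]
    exact Finset.card_le_card hsub
  have hm1 : ∀ i ∈ D, 1 ≤ m i := by
    intro i hi
    have := (Finset.mem_filter.mp hi).2
    omega
  -- apply the key lemma
  have hkey := lemK D p hppos hDsump hcard n m hm1 hDsum
  rw [hDprod, ← hpiTdef] at hkey
  have hsum_eq : ∑ i ∈ D, (m i : ℝ)^2 * (piP p (PTree.node ts) / p i)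
      = (∑ i ∈ R, (m i : ℝ)^2 / p i) * piP p (PTree.node ts) := by
    have h1 : ∑ i ∈ D, (m i : ℝ)^2 / p i = ∑ i ∈ R, (m i : ℝ)^2 / p i := by
      apply Finset.sum_filter_of_ne
      intro x _ hx
      intro h0
      apply hx
      rw [h0]
      norm_num
    rw [← h1, Finset.sum_mul]
    apply Finset.sum_congr rfl
    intro i _
    ring
  rw [hsum_eq] at hkey
  -- conclude
  set π : ℝ := piP p (PTree.node ts) with hπ
  set S : ℝ := ∑ i ∈ R, (m i : ℝ)^2 / p i with hS
  have hη : etaP p (PTree.node ts) = ((n:ℝ) - 1)^2 - S := rfl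
  have hγ : gammaP p (PTree.node ts) = π + (((n:ℝ) - 1)^2 - S) * π^2 := by
    rw [gammaP, hη]
  rw [hγ]
  have h4 : π * π ≤ (1 + ((n:ℝ)-1)^2 * π - S * π) * π := by
    apply mul_le_mul_of_nonneg_right _ hpi.le
    linarith
  have h5 : (1 + ((n:ℝ)-1)^2 * π - S * π) * π = π + (((n:ℝ)-1)^2 - S) * π^2 := by ring
  have h6 : 0 < π * π := mul_pos hpi hpi
  linarith

/-- If `p` is a probability distribution on `ℕ` with mean `≤ 1` and `T` is a plane tree with
`|T| > 1` and `π_p(T) > 0`, then `γ_p(T,T) = π_p(T) + η_p(T,T) π_p(T)² > 0`. -/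
theorem stmt_11 (p : ℕ → ℝ) (hp0 : ∀ i, 0 ≤ p i) (hp1 : HasSum p 1)
    (hmean : ∑' i : ℕ, (i : ℝ) * p i ≤ 1)
    (T : PTree) (hT : 1 < T.size) (hpi : 0 < piP p T) :
    0 < gammaP p T :=
  stmt_11' p hp0 hp1 T hT hpi
end
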